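/- Let M be a bounded linear operator on a complex Hilbert space H with ‖M‖ ≤ 1, let u, v be unit vectors in H, and suppose b ∈ ℂ satisfies M*u = 0 and M*v = b̄·v. Then |b| ≤ δ(u,v) = √(1 − |⟨u,v⟩|²). -/

import Mathlib

/-- contractive multiplier bound. Let `M` be a bounded
operator on a complex Hilbert space with `‖M‖ ≤ 1`, `u, v` unit vectors, and
`b ∈ ℂ` with `M*u = 0` and `M*v = b̄·v`. Then
`|b| ≤ δ(u,v) = √(1 − |⟨u,v⟩|²)`. -/
theorem contractive_multiplier_bound {H : Type*} [NormedAddCommGroup H]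
    [InnerProductSpace ℂ H] [CompleteSpace H] (M : H →L[ℂ] H) (hM : ‖M‖ ≤ 1)
    (u v : H) (hu : ‖u‖ = 1) (hv : ‖v‖ = 1) (b : ℂ)
    (hMu : ContinuousLinearMap.adjoint M u = 0)
    (hMv : ContinuousLinearMap.adjoint M v = (starRingEnd ℂ b) • v) :
    ‖b‖ ≤ Real.sqrt (1 - ‖(inner ℂ u v : ℂ)‖ ^ 2) := by
  set c : ℂ := inner ℂ u v with hc
  set w : H := v - c • u with hw
  have hMw : ContinuousLinearMap.adjoint M w = (starRingEnd ℂ b) • v := by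
    simp [hw, map_sub, hMu, hMv]
  have hwnorm : ‖w‖ ^ 2 = 1 - ‖c‖ ^ 2 := by
    have h1 : ‖w‖ ^ 2 = ‖v‖ ^ 2 - 2 * Complex.re (inner ℂ v (c • u) : ℂ) + ‖c • u‖ ^ 2 := by
      exact norm_sub_sq (𝕜 := ℂ) v (c • u)
    have h2 : (inner ℂ v (c • u) : ℂ) = c * starRingEnd ℂ c := by
      rw [inner_smul_right, ← inner_conj_symm, ← hc]
    have h3 : Complex.re (c * starRingEnd ℂ c) = ‖c‖ ^ 2 := by
      rw [Complex.mul_conj, Complex.ofReal_re, Complex.normSq_eq_norm_sq]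
    rw [h1, h2, h3, norm_smul, hu, hv]
    ring
  have hb : ‖b‖ ≤ ‖w‖ := by
    have h4 : ‖(ContinuousLinearMap.adjoint M) w‖ ≤ ‖(ContinuousLinearMap.adjoint M)‖ * ‖w‖ :=
      ContinuousLinearMap.le_opNorm (ContinuousLinearMap.adjoint M) w
    have h5 : ‖(ContinuousLinearMap.adjoint M)‖ = ‖M‖ := ContinuousLinearMap.adjoint.norm_map M
    have h6 : ‖(ContinuousLinearMap.adjoint M) w‖ = ‖b‖ := by
      rw [hMw, norm_smul, hv]; simp
    calc ‖b‖ = ‖(ContinuousLinearMap.adjoint M) w‖ := h6.symm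
      _ ≤ ‖(ContinuousLinearMap.adjoint M)‖ * ‖w‖ := h4
      _ ≤ 1 * ‖w‖ := by
          apply mul_le_mul_of_nonneg_right _ (norm_nonneg w)
          rw [h5]; exact hM
      _ = ‖w‖ := one_mul _
  have : ‖w‖ = Real.sqrt (1 - ‖c‖ ^ 2) := by
    rw [← hwnorm, Real.sqrt_sq (norm_nonneg w)]
  exact this ▸ hb
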